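/- For every sequence (a_1,...,a_n) ∈ [n+1]^n, exactly one of the n+1 cyclic shifts (a_1+i mod n+1, ..., a_n+i mod n+1), for i = 0,1,...,n (with values taken in [n+1]), is a parking function of length n. -/

import Mathlib

/-- The representative of `s` modulo `t` lying in `[t] = {1, …, t}` (for `s ≥ 1`). -/
def modRep (s t : ℕ) : ℕ := (s - 1) % t + 1

/-- `a` is a parking function of length `n`. -/
def IsParkingFunction (n : ℕ) (a : Fin n → ℕ) : Prop :=
  ∃ σ : Equiv.Perm (Fin n), Monotone (a ∘ σ) ∧ ∀ i : Fin n, a (σ i) ≤ i.val + 1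

section Aux

lemma card_filter_perm {n : ℕ} (σ : Equiv.Perm (Fin n)) (p : Fin n → Prop) [DecidablePred p] :
    (Finset.univ.filter fun j => p (σ j)).card = (Finset.univ.filter p).card := by
  apply Finset.card_bij (fun j _ => σ j)
  · intro j hj; simp_all
  · intro j₁ _ j₂ _ h; exact σ.injective h
  · intro j hj; exact ⟨σ.symm j, by simp_all, by simp⟩

lemma pf_iff_count {n : ℕ} (b : Fin n → ℕ) :
    IsParkingFunction n b ↔
      ∀ k < n, k + 1 ≤ (Finset.univ.filter fun j => b j ≤ k + 1).card := by
  constructor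
  · rintro ⟨σ, hmono, hle⟩ k hk
    rw [← card_filter_perm σ]
    have hsub : Finset.Iic (⟨k, hk⟩ : Fin n) ⊆
        Finset.univ.filter fun j => b (σ j) ≤ k + 1 := by
      intro j hj
      simp only [Finset.mem_Iic] at hj
      simp only [Finset.mem_filter, Finset.mem_univ, true_and]
      exact le_trans (hmono hj) (hle ⟨k, hk⟩)
    calc k + 1 = (Finset.Iic (⟨k, hk⟩ : Fin n)).card := by rw [Fin.card_Iic]
      _ ≤ _ := Finset.card_le_card hsub
  · intro h
    refine ⟨Tuple.sort b, Tuple.monotone_sort b, fun i => ?_⟩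
    by_contra hcon
    push_neg at hcon
    have h1 := h i.val i.isLt
    rw [← card_filter_perm (Tuple.sort b)] at h1
    have hsub : (Finset.univ.filter fun j => b (Tuple.sort b j) ≤ i.val + 1) ⊆
        Finset.Iio i := by
      intro j hj
      simp only [Finset.mem_filter, Finset.mem_univ, true_and] at hj
      simp only [Finset.mem_Iio]
      by_contra hji
      push_neg at hji
      exact absurd (le_trans hcon (Tuple.monotone_sort b hji)) (not_lt.mpr hj)
    have := le_trans h1 (Finset.card_le_card hsub)
    rw [Fin.card_Iio] at this
    omega

lemma modlem {x r i u t : ℕ} (hx : x < t) (hr : r < t) (hiu : (i + u) % t = 0) :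
    ((x + i) % t = r ↔ x = (r + u) % t) := by
  have hiu' : (i + u) ≡ 0 [MOD t] := by unfold Nat.ModEq; simp [hiu]
  constructor
  · intro h
    have h1 : x ≡ r + u [MOD t] := by
      calc x = x + 0 := by ring
        _ ≡ x + (i + u) [MOD t] := Nat.ModEq.add_left x hiu'.symm
        _ = (x + i) + u := by ring
        _ ≡ r + u [MOD t] := Nat.ModEq.add_right u
            (by unfold Nat.ModEq; rw [h, Nat.mod_eq_of_lt hr])
    have h2 : _ % t = _ % t := h1
    rwa [Nat.mod_eq_of_lt hx] at h2
  · intro h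
    subst h
    have h1 : (r + u) % t + i ≡ r [MOD t] := by
      calc (r + u) % t + i ≡ (r + u) + i [MOD t] := Nat.ModEq.add_right i (Nat.mod_modEq _ _)
        _ = r + (i + u) := by ring
        _ ≡ r + 0 [MOD t] := Nat.ModEq.add_left r hiu'
        _ = r := by ring
    have h2 : _ % t = _ % t := h1
    rwa [Nat.mod_eq_of_lt hr] at h2

lemma countle {n m : ℕ} (x : Fin n → ℕ) :
    (Finset.univ.filter fun j => x j ≤ m).card
      = ∑ r ∈ Finset.range (m + 1), (Finset.univ.filter fun j => x j = r).card := by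
  rw [Finset.card_eq_sum_card_fiberwise (f := x) (t := Finset.range (m + 1))
    (fun j hj => by simp only [Finset.mem_coe, Finset.mem_filter] at hj; simp [Nat.lt_succ_iff, hj.2])]
  refine Finset.sum_congr rfl fun r hr => ?_
  rw [Finset.mem_range, Nat.lt_succ_iff] at hr
  congr 1
  rw [Finset.filter_filter]
  refine Finset.filter_congr fun j _ => ?_
  constructor
  · exact fun h => by simp_all
  · exact fun h => by simp_all

lemma cycle_lemma (n : ℕ) (N : ℕ → ℕ) (hN : ∑ r ∈ Finset.range (n + 1), N r = n)
    (S : ℕ → ℤ) (hS : S = fun m => (∑ r ∈ Finset.range m, (N (r % (n + 1)) : ℤ)) - m) :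
    ∃! u, u ∈ Finset.range (n + 1) ∧ ∀ m, 1 ≤ m → m ≤ n → S u ≤ S (u + m) := by
  have hstep : ∀ m, S (m + 1) = S m + N (m % (n + 1)) - 1 := by
    intro m; simp only [hS, Finset.sum_range_succ]; push_cast; ring
  have hper : ∀ m, S (m + (n + 1)) = S m - 1 := by
    intro m
    induction m with
    | zero =>
      have e : ∑ r ∈ Finset.range (n + 1), (N (r % (n + 1)) : ℤ)
          = ∑ r ∈ Finset.range (n + 1), (N r : ℤ) := by
        refine Finset.sum_congr rfl fun r hr => ?_
        rw [Nat.mod_eq_of_lt (Finset.mem_range.mp hr)]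
      have e2 : ∑ r ∈ Finset.range (n + 1), (N r : ℤ) = (n : ℤ) := by
        rw [← Nat.cast_sum, hN]
      simp only [hS, zero_add, e, e2, Finset.range_zero, Finset.sum_empty]
      push_cast; ring
    | succ k ih =>
      have e : k + 1 + (n + 1) = (k + (n + 1)) + 1 := by ring
      rw [e, hstep, ih, hstep k]
      rw [Nat.add_mod_right]
      ring
  have hchar : ∀ u, u ≤ n →
      ((∀ m, 1 ≤ m → m ≤ n → S u ≤ S (u + m)) ↔
        (∀ v, v ≤ n → S u ≤ S v) ∧ ∀ v, v < u → S u < S v) := by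
    intro u hu
    constructor
    · intro hP
      have key : ∀ v, v < u → S u < S v := by
        intro v hv
        have h1 := hP (v + (n + 1) - u) (by omega) (by omega)
        have e : u + (v + (n + 1) - u) = v + (n + 1) := by omega
        rw [e, hper] at h1
        linarith
      refine ⟨fun v hv => ?_, key⟩
      rcases lt_trichotomy v u with h | h | h
      · exact le_of_lt (key v h)
      · exact h ▸ le_refl _
      · have h1 := hP (v - u) (by omega) (by omega)
        have e : u + (v - u) = v := by omega
        rwa [e] at h1
    · rintro ⟨h1, h2⟩ m hm1 hm2
      by_cases h : u + m ≤ n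
      · exact h1 (u + m) h
      · have e : u + m = (u + m - (n + 1)) + (n + 1) := by omega
        rw [e, hper]
        have := h2 (u + m - (n + 1)) (by omega)
        linarith
  obtain ⟨u₀, hu₀, hmin₀⟩ := Finset.exists_min_image (Finset.range (n + 1)) S ⟨0, by simp⟩
  rw [Finset.mem_range] at hu₀
  have hex : ∃ u, S u = S u₀ := ⟨u₀, rfl⟩
  set u₁ := Nat.find hex with hu₁
  have hu₁val : S u₁ = S u₀ := Nat.find_spec hex
  have hu₁le : u₁ ≤ n := le_trans (Nat.find_min' hex rfl) (by omega)
  have hmin : ∀ v, v ≤ n → S u₁ ≤ S v := by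
    intro v hv
    rw [hu₁val]
    exact hmin₀ v (Finset.mem_range.mpr (by omega))
  have hstrict : ∀ v, v < u₁ → S u₁ < S v := by
    intro v hv
    have hne : S v ≠ S u₀ := Nat.find_min hex hv
    have := hmin v (by omega)
    rcases lt_or_eq_of_le this with h | h
    · exact h
    · exact absurd (h.symm.trans hu₁val) hne
  refine ⟨u₁, ⟨Finset.mem_range.mpr (by omega : u₁ < n + 1),
    (hchar u₁ hu₁le).mpr ⟨hmin, hstrict⟩⟩, ?_⟩
  rintro u ⟨humem, hPu⟩
  rw [Finset.mem_range] at humem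
  obtain ⟨hmin', hstrict'⟩ := (hchar u (by omega)).mp hPu
  rcases lt_trichotomy u u₁ with h | h | h
  · have := hstrict u h
    have := hmin' u₁ hu₁le
    linarith
  · exact h
  · have := hstrict' u₁ h
    have := hmin u (by omega)
    linarith

lemma invol {n : ℕ} {w : ℕ} (hw : w < n + 1) :
    (n + 1 - ((n + 1 - w) % (n + 1))) % (n + 1) = w := by
  rcases Nat.eq_zero_or_pos w with h0 | h0
  · subst h0
    rw [Nat.sub_zero, Nat.mod_self, Nat.sub_zero, Nat.mod_self]
  · rw [Nat.mod_eq_of_lt (by omega : n + 1 - w < n + 1)]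
    rw [Nat.mod_eq_of_lt (by omega : n + 1 - (n + 1 - w) < n + 1)]
    omega

lemma shift_mod_zero {n i : ℕ} (hi : i < n + 1) :
    (i + (n + 1 - i) % (n + 1)) % (n + 1) = 0 := by
  rcases Nat.eq_zero_or_pos i with h0 | h0
  · subst h0; simp
  · rw [Nat.mod_eq_of_lt (by omega : n + 1 - i < n + 1)]
    rw [show i + (n + 1 - i) = n + 1 by omega, Nat.mod_self]

end Aux

/-- For every `(a 1, …, a n) ∈ [n+1]^n`, exactly one of the `n+1` cyclic shifts
`(a j + i mod n+1)`, `i = 0, 1, …, n` (values taken in `[n+1]`), is a parking function. -/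
theorem stmt2 (n : ℕ) (a : Fin n → ℕ) (ha : ∀ j, a j ∈ Finset.Icc 1 (n + 1)) :
    ∃! i, i ∈ Finset.range (n + 1) ∧
      IsParkingFunction n (fun j => modRep (a j + i) (n + 1)) := by
  have ha1 : ∀ j, 1 ≤ a j := fun j => (Finset.mem_Icc.mp (ha j)).1
  have ha2 : ∀ j, a j - 1 < n + 1 := fun j => by
    have := (Finset.mem_Icc.mp (ha j)).2; omega
  set N : ℕ → ℕ := fun r => (Finset.univ.filter fun j => a j - 1 = r).card with hNdef
  have hNsum : ∑ r ∈ Finset.range (n + 1), N r = n := by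
    have := Finset.card_eq_sum_card_fiberwise
      (f := fun j : Fin n => a j - 1) (s := Finset.univ) (t := Finset.range (n + 1))
      (fun j _ => Finset.mem_range.mpr (ha2 j))
    simp only [Finset.card_univ, Fintype.card_fin] at this
    rw [← this]
  set S : ℕ → ℤ := fun m => (∑ r ∈ Finset.range m, (N (r % (n + 1)) : ℤ)) - m with hSdef
  -- S(u+m) decomposition
  have hSadd : ∀ u m : ℕ,
      S (u + m) = S u + (∑ r ∈ Finset.range m, (N ((u + r) % (n + 1)) : ℤ)) - m := by
    intro u m
    simp only [hSdef, Finset.sum_range_add]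
    push_cast
    ring
  -- key equivalence: shift i is a PF iff the walk condition holds at u = (n+1-i) % (n+1)
  have hPF : ∀ i, i < n + 1 →
      (IsParkingFunction n (fun j => modRep (a j + i) (n + 1)) ↔
        ∀ m, 1 ≤ m → m ≤ n →
          S ((n + 1 - i) % (n + 1)) ≤ S ((n + 1 - i) % (n + 1) + m)) := by
    intro i hi
    set u := (n + 1 - i) % (n + 1) with hu
    have hiu : (i + u) % (n + 1) = 0 := shift_mod_zero hi
    rw [pf_iff_count]
    -- rewrite the counting condition
    have hcount : ∀ k, k < n + 1 →
        (Finset.univ.filter fun j => modRep (a j + i) (n + 1) ≤ k + 1).card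
          = ∑ r ∈ Finset.range (k + 1), N ((r + u) % (n + 1)) := by
      intro k hk
      have e1 : (Finset.univ.filter fun j => modRep (a j + i) (n + 1) ≤ k + 1)
          = Finset.univ.filter fun j => ((a j - 1) + i) % (n + 1) ≤ k := by
        refine Finset.filter_congr fun j _ => ?_
        have h1 := ha1 j
        simp only [modRep]
        rw [show a j + i - 1 = (a j - 1) + i by omega]
        omega
      rw [e1, countle]
      refine Finset.sum_congr rfl fun r hr => ?_
      rw [Finset.mem_range, Nat.lt_succ_iff] at hr
      have e2 : (Finset.univ.filter fun j => ((a j - 1) + i) % (n + 1) = r)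
          = Finset.univ.filter fun j => a j - 1 = (r + u) % (n + 1) := by
        refine Finset.filter_congr fun j _ => ?_
        simpa using modlem (ha2 j) (by omega : r < n + 1) hiu
      rw [e2]
    constructor
    · intro h m hm1 hm2
      have hk := h (m - 1) (by omega)
      rw [hcount (m - 1) (by omega)] at hk
      rw [show m - 1 + 1 = m by omega] at hk
      rw [hSadd]
      have : (m : ℤ) ≤ ∑ r ∈ Finset.range m, (N ((u + r) % (n + 1)) : ℤ) := by
        rw [← Nat.cast_sum]
        exact_mod_cast (by
          calc m ≤ ∑ r ∈ Finset.range m, N ((r + u) % (n + 1)) := hk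
            _ = ∑ r ∈ Finset.range m, N ((u + r) % (n + 1)) := by
                refine Finset.sum_congr rfl fun r _ => by rw [Nat.add_comm r u])
      linarith
    · intro h k hk
      have h1 := h (k + 1) (by omega) (by omega)
      rw [hSadd] at h1
      push_cast at h1
      rw [hcount k (by omega)]
      have h2 : ((k : ℤ) + 1) ≤ ∑ r ∈ Finset.range (k + 1), (N ((u + r) % (n + 1)) : ℤ) := by
        linarith
      have h3 : ∑ r ∈ Finset.range (k + 1), (N ((u + r) % (n + 1)) : ℤ)
          = ((∑ r ∈ Finset.range (k + 1), N ((r + u) % (n + 1)) : ℕ) : ℤ) := by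
        rw [Nat.cast_sum]
        refine Finset.sum_congr rfl fun r _ => by rw [Nat.add_comm r u]
      rw [h3] at h2
      exact_mod_cast h2
  -- apply the cycle lemma
  obtain ⟨u₁, ⟨hu₁mem, hPu₁⟩, huniq⟩ := cycle_lemma n N hNsum S hSdef
  rw [Finset.mem_range] at hu₁mem
  refine ⟨(n + 1 - u₁) % (n + 1), ⟨Finset.mem_range.mpr (Nat.mod_lt _ (by omega)), ?_⟩, ?_⟩
  · rw [hPF _ (Nat.mod_lt _ (by omega))]
    rw [invol hu₁mem]
    exact hPu₁
  · rintro i ⟨himem, hpf⟩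
    rw [Finset.mem_range] at himem
    have hwalk := (hPF i himem).mp hpf
    have heq : (n + 1 - i) % (n + 1) = u₁ :=
      huniq ((n + 1 - i) % (n + 1))
        ⟨Finset.mem_range.mpr (Nat.mod_lt _ (by omega)), hwalk⟩
    rw [← heq, invol himem]
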